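/- Let E = EuclideanSpace ℝ (Fin n), let Inv ⊆ E, let f : E → E, and let V₁, …, V_k : E → ℝ (indexed by Fin k) be differentiable functions such that for each i there exists a class K∞ function γ_i with ⟪gradient V_i x, f x⟫ ≤ −γ_i ‖x‖ for all x ∈ Inv. Then for any nonnegative reals λ₁, …, λ_k with at least one λ_i strictly positive, the conical combination W = ∑ i, λ_i • V_i is differentiable and there exists a class K∞ function γ (namely γ = ∑ i, λ_i • γ_i) with ⟪gradient W x, f x⟫ ≤ −γ ‖x‖ for all x ∈ Inv. -/

import Mathlib

open Filter

/-- A function `α : ℝ → ℝ` is of class K∞. -/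
def ClassKInf (α : ℝ → ℝ) : Prop :=
  Continuous α ∧ α 0 = 0 ∧ StrictMonoOn α (Set.Ici (0 : ℝ)) ∧
    Tendsto α atTop atTop

lemma hasGradientAt_conical {n k : ℕ} (V : Fin k → EuclideanSpace ℝ (Fin n) → ℝ)
    (hVdiff : ∀ i, Differentiable ℝ (V i)) (lam : Fin k → ℝ)
    (x : EuclideanSpace ℝ (Fin n)) :
    HasGradientAt (fun x => ∑ i, lam i • V i x)
      (∑ i, lam i • gradient (V i) x) x := by
  rw [hasGradientAt_iff_hasFDerivAt, map_sum]
  have : ∀ i ∈ Finset.univ, HasFDerivAt (fun x => lam i • V i x)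
      ((InnerProductSpace.toDual ℝ _) (lam i • gradient (V i) x)) x := by
    intro i _
    rw [map_smul]
    exact (((hVdiff i x).hasGradientAt.hasFDerivAt)).const_smul (lam i)
  simpa using HasFDerivAt.fun_sum this

/-- conical combinations of differentiable functions satisfying
the Lyapunov flow constraint on an invariant set again satisfy it, with the
conical combination of the K∞ bounds as witness. -/
theorem flow_constraint_conical_combination
    {n : ℕ} (Inv : Set (EuclideanSpace ℝ (Fin n)))
    (f : EuclideanSpace ℝ (Fin n) → EuclideanSpace ℝ (Fin n))
    {k : ℕ} (V : Fin k → EuclideanSpace ℝ (Fin n) → ℝ)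
    (hVdiff : ∀ i, Differentiable ℝ (V i))
    (γ : Fin k → ℝ → ℝ) (hγK : ∀ i, ClassKInf (γ i))
    (hflow : ∀ i, ∀ x ∈ Inv,
      inner (𝕜 := ℝ) (gradient (V i) x) (f x) ≤ -(γ i ‖x‖))
    (lam : Fin k → ℝ) (hnn : ∀ i, 0 ≤ lam i) (hpos : ∃ i, 0 < lam i) :
    Differentiable ℝ (fun x => ∑ i, lam i • V i x) ∧
    ∃ g : ℝ → ℝ, ClassKInf g ∧ (g = fun r => ∑ i, lam i • γ i r) ∧
      ∀ x ∈ Inv,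
        inner (𝕜 := ℝ) (gradient (fun x => ∑ i, lam i • V i x) x) (f x)
          ≤ -(g ‖x‖) := by
  obtain ⟨i₀, hi₀⟩ := hpos
  have hgrad := hasGradientAt_conical V hVdiff lam
  have hmono : ∀ i, MonotoneOn (γ i) (Set.Ici (0 : ℝ)) :=
    fun i => ((hγK i).2.2.1).monotoneOn
  have hγnn : ∀ i, ∀ r : ℝ, 0 ≤ r → 0 ≤ γ i r := by
    intro i r hr
    have := hmono i (Set.self_mem_Ici) hr hr
    rwa [(hγK i).2.1] at this
  refine ⟨fun x => ((hgrad x).hasFDerivAt).differentiableAt, _, ?_, rfl, ?_⟩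
  · refine ⟨?_, ?_, ?_, ?_⟩
    · exact continuous_finset_sum _ fun i _ => (continuous_const.mul (hγK i).1)
    · simp [(hγK _).2.1]
    · intro a ha b hb hab
      refine Finset.sum_lt_sum (fun i _ => ?_) ⟨i₀, Finset.mem_univ _, ?_⟩
      · exact smul_le_smul_of_nonneg_left (hmono i ha hb hab.le) (hnn i)
      · exact smul_lt_smul_of_pos_left ((hγK i₀).2.2.1 ha hb hab) hi₀
    · have hmain : Tendsto (fun r => lam i₀ • γ i₀ r) atTop atTop :=
        Tendsto.const_mul_atTop hi₀ (hγK i₀).2.2.2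
      refine tendsto_atTop_mono' atTop ?_ hmain
      filter_upwards [eventually_ge_atTop (0 : ℝ)] with r hr
      exact Finset.single_le_sum
        (fun i _ => smul_nonneg (hnn i) (hγnn i r hr)) (Finset.mem_univ i₀)
  · intro x hx
    rw [(hgrad x).gradient, sum_inner]
    have : ∀ i ∈ Finset.univ,
        inner (𝕜 := ℝ) (lam i • gradient (V i) x) (f x) ≤ lam i • (-(γ i ‖x‖)) := by
      intro i _
      rw [real_inner_smul_left]
      exact mul_le_mul_of_nonneg_left (hflow i x hx) (hnn i)
    calc ∑ i, inner (𝕜 := ℝ) (lam i • gradient (V i) x) (f x)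
        ≤ ∑ i, lam i • (-(γ i ‖x‖)) := Finset.sum_le_sum this
      _ = -(∑ i, lam i • γ i ‖x‖) := by simp [mul_neg]
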